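/- Let (Λ, 𝓐, μ) be a finite measure space, d ≥ 1 and T > 0. Let f : Λ × ℝ^d → (0, ∞) be a measurable probability density with respect to μ ⊗ Lebesgue, i.e. ∫_Λ ∫_{ℝ^d} f(x,v) dv dμ(x) = 1, set ρ_f(x) = ∫_{ℝ^d} f(x,v) dv, and assume the energy constraint ∫_Λ ∫_{ℝ^d} |v|² f(x,v) dv dμ(x) = dT. Assume that f log f, ρ_f(x) m_T(v) log f(x,v) and |v|² f are integrable. Then ∫_Λ ∫_{ℝ^d} log f(x,v) · ( m_T(v) ρ_f(x) − f(x,v) ) dv dμ(x) ≤ 0, with equality if and only if f(x,v) = ρ_f(x) m_T(v) for almost every (x,v). -/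

import Mathlib

open MeasureTheory
open Real

/-- The centered Maxwellian (Gaussian) probability density at temperature `T` on `ℝᵈ`. -/
noncomputable def maxwellian (d : ℕ) (T : ℝ) (v : EuclideanSpace ℝ (Fin d)) : ℝ :=
  (2 * Real.pi * T) ^ (-(d : ℝ) / 2) * Real.exp (-‖v‖ ^ 2 / (2 * T))

lemma maxwellian_pos (d : ℕ) {T : ℝ} (hT : 0 < T) (v : EuclideanSpace ℝ (Fin d)) :
    0 < maxwellian d T v := by
  unfold maxwellian
  positivity

lemma maxwellian_eq (d : ℕ) {T : ℝ} (hT : 0 < T) (v : EuclideanSpace ℝ (Fin d)) :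
    maxwellian d T v = (2 * π * T) ^ (-(d : ℝ) / 2) * rexp (-(1/(2*T)) * ‖v‖ ^ 2) := by
  unfold maxwellian
  congr 1
  congr 1
  field_simp

lemma integral_maxwellian (d : ℕ) {T : ℝ} (hT : 0 < T) :
    ∫ v : EuclideanSpace ℝ (Fin d), maxwellian d T v = 1 := by
  have hb : (0:ℝ) < 1/(2*T) := by positivity
  have h2πT : (0:ℝ) < 2 * π * T := by positivity
  rw [MeasureTheory.integral_congr_ae (Filter.Eventually.of_forall (maxwellian_eq d hT))]
  rw [MeasureTheory.integral_const_mul, GaussianFourier.integral_rexp_neg_mul_sq_norm hb]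
  rw [finrank_euclideanSpace_fin]
  have : π / (1/(2*T)) = 2 * π * T := by field_simp
  rw [this, ← Real.rpow_add h2πT]
  rw [show (-(d:ℝ) / 2 + (d:ℝ) / 2) = 0 by ring, Real.rpow_zero]

lemma moment1d {b : ℝ} (hb : 0 < b) :
    ∫ x : ℝ, x ^ 2 * rexp (-b * x ^ 2) = b ^ (-(3:ℝ)/2) * (Real.sqrt π / 2) := by
  have h1 : ∫ x : ℝ, x ^ 2 * rexp (-b * x ^ 2)
      = ∫ x : ℝ, (fun t : ℝ => t ^ 2 * rexp (-b * t ^ 2)) |x| := by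
    congr 1; funext x; simp [sq_abs]
  rw [h1, integral_comp_abs (f := fun t : ℝ => t ^ 2 * rexp (-b * t ^ 2))]
  have h2 : ∫ x in Set.Ioi (0:ℝ), x ^ 2 * rexp (-b * x ^ 2)
      = ∫ x in Set.Ioi (0:ℝ), x ^ (2:ℝ) * rexp (-b * x ^ (2:ℝ)) := by
    refine setIntegral_congr_fun measurableSet_Ioi (fun x hx => ?_)
    rw [← Real.rpow_natCast x 2]; norm_num
  rw [h2, integral_rpow_mul_exp_neg_mul_rpow two_pos (by norm_num) hb]
  have h3 : ((2:ℝ) + 1) / 2 = 1/2 + 1 := by norm_num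
  rw [h3, Real.Gamma_add_one (by norm_num), Real.Gamma_one_half_eq]
  rw [show (-((2:ℝ)+1)/2) = (-(3:ℝ)/2) by norm_num]
  ring


lemma integrable_sq_exp {b : ℝ} (hb : 0 < b) :
    Integrable (fun t : ℝ => t ^ 2 * rexp (-b * t ^ 2)) := by
  have := integrable_rpow_mul_exp_neg_mul_sq hb (s := 2) (by norm_num)
  refine this.congr (Filter.Eventually.of_forall (fun x => ?_))
  norm_num [show ((2:ℝ):ℝ) = ((2:ℕ):ℝ) by norm_num, Real.rpow_natCast]

lemma moment_eucl (d : ℕ) (hd : 1 ≤ d) {b : ℝ} (hb : 0 < b) :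
    ∫ v : EuclideanSpace ℝ (Fin d), ‖v‖ ^ 2 * rexp (-b * ‖v‖ ^ 2)
      = (d : ℝ) / (2 * b) * (π / b) ^ ((d : ℝ) / 2) := by
  have hmp := (EuclideanSpace.volume_preserving_symm_measurableEquiv_toLp (Fin d)).symm
  rw [← hmp.integral_comp (MeasurableEquiv.measurableEmbedding _)]
  have hnorm : ∀ x : Fin d → ℝ,
      ‖(MeasurableEquiv.toLp 2 (Fin d → ℝ)).symm.symm x‖ ^ 2 = ∑ i, (x i) ^ 2 := by
    intro x
    rw [EuclideanSpace.norm_eq, Real.sq_sqrt (Finset.sum_nonneg fun i _ => sq_nonneg _)]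
    simp
  set e0 : ℝ → ℝ := fun t => rexp (-b * t ^ 2) with he0
  set e2 : ℝ → ℝ := fun t => t ^ 2 * rexp (-b * t ^ 2) with he2
  set g : Fin d → Fin d → ℝ → ℝ := fun i => Function.update (fun _ => e0) i e2 with hg
  have key : ∀ x : Fin d → ℝ,
      ‖(MeasurableEquiv.toLp 2 (Fin d → ℝ)).symm.symm x‖ ^ 2
        * rexp (-b * ‖(MeasurableEquiv.toLp 2 (Fin d → ℝ)).symm.symm x‖ ^ 2)
      = ∑ i, ∏ j, g i j (x j) := by
    intro x
    rw [hnorm x]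
    have hexp : rexp (-b * ∑ i, (x i) ^ 2) = ∏ j, e0 (x j) := by
      rw [← Real.exp_sum]
      congr 1
      rw [Finset.mul_sum]
    rw [hexp, Finset.sum_mul]
    refine Finset.sum_congr rfl (fun i _ => ?_)
    simp only [hg]
    have hprod : ∏ j ∈ Finset.univ.erase i, Function.update (fun _ : Fin d => e0) i e2 j (x j)
        = ∏ j ∈ Finset.univ.erase i, e0 (x j) :=
      Finset.prod_congr rfl (fun j hj => by
        rw [Function.update_of_ne (Finset.ne_of_mem_erase hj)])
    rw [← Finset.mul_prod_erase _
        (fun j => Function.update (fun _ : Fin d => e0) i e2 j (x j)) (Finset.mem_univ i),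
      ← Finset.mul_prod_erase _ (fun j => e0 (x j)) (Finset.mem_univ i),
      hprod, Function.update_self]
    simp only [he0, he2]
    ring
  rw [MeasureTheory.integral_congr_ae (Filter.Eventually.of_forall key)]
  have hint : ∀ i j : Fin d, Integrable (g i j) := by
    intro i j
    rcases eq_or_ne j i with rfl | h
    · simp only [hg, Function.update_self]; exact integrable_sq_exp hb
    · simp only [hg, Function.update_of_ne h]; exact integrable_exp_neg_mul_sq hb
  rw [MeasureTheory.volume_pi, MeasureTheory.integral_finset_sum _ (fun i _ =>
    MeasureTheory.Integrable.fintype_prod (f := g i) (fun j => hint i j))]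
  have hM0 : ∫ t : ℝ, e0 t = (π / b) ^ ((1:ℝ)/2) := by
    rw [he0]; rw [integral_gaussian, Real.sqrt_eq_rpow]
  have hM2 : ∫ t : ℝ, e2 t = b ^ (-(3:ℝ)/2) * (Real.sqrt π / 2) := moment1d hb
  have hterm : ∀ i : Fin d, ∫ x : Fin d → ℝ, ∏ j, g i j (x j)
      = (b ^ (-(3:ℝ)/2) * (Real.sqrt π / 2)) * ((π / b) ^ ((1:ℝ)/2)) ^ (d - 1) := by
    intro i
    rw [MeasureTheory.volume_pi, MeasureTheory.integral_fintype_prod_eq_prod (g i)]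
    have : ∀ j, (∫ x, g i j x) = Function.update (fun _ : Fin d => (π / b) ^ ((1:ℝ)/2))
        i (b ^ (-(3:ℝ)/2) * (Real.sqrt π / 2)) j := by
      intro j
      rcases eq_or_ne j i with rfl | h
      · simp only [hg, Function.update_self]; exact hM2
      · simp only [hg, Function.update_of_ne h]
        exact hM0
    rw [Finset.prod_congr rfl (fun j _ => this j),
      Finset.prod_update_of_mem (Finset.mem_univ i), Finset.prod_const,
      Finset.sdiff_singleton_eq_erase, Finset.card_erase_of_mem (Finset.mem_univ i),
      Finset.card_univ, Fintype.card_fin]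
  rw [← MeasureTheory.volume_pi, Finset.sum_congr rfl (fun i _ => hterm i), Finset.sum_const, Finset.card_univ,
    Fintype.card_fin, nsmul_eq_mul]
  -- algebra
  have hπb : (0:ℝ) < π / b := div_pos Real.pi_pos hb
  rw [← Real.rpow_natCast ((π / b) ^ ((1:ℝ)/2)) (d - 1), ← Real.rpow_mul hπb.le]
  have hcast : ((d - 1 : ℕ) : ℝ) = (d : ℝ) - 1 := by
    have : (1:ℕ) ≤ d := hd
    push_cast [this]
    ring
  rw [hcast]
  rw [Real.div_rpow Real.pi_pos.le hb.le, Real.div_rpow Real.pi_pos.le hb.le, Real.sqrt_eq_rpow]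
  have hπ2 : π ^ ((1:ℝ)/2) * π ^ ((1:ℝ)/2 * ((d:ℝ) - 1)) = π ^ ((d:ℝ)/2) := by
    rw [← Real.rpow_add Real.pi_pos]; congr 1; ring
  have hbinv : b⁻¹ = b ^ (-1:ℝ) := by rw [Real.rpow_neg hb.le, Real.rpow_one]
  have hbkey : b ^ (-(3:ℝ)/2) * (b ^ ((1:ℝ)/2 * ((d:ℝ) - 1)))⁻¹
      = (b ^ ((d:ℝ)/2))⁻¹ * b⁻¹ := by
    rw [← Real.rpow_neg hb.le, ← Real.rpow_neg hb.le, hbinv,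
      ← Real.rpow_add hb, ← Real.rpow_add hb]
    congr 1; ring
  linear_combination ((d:ℝ)/2) * ((b ^ (-(3:ℝ)/2) * (b ^ ((1:ℝ)/2 * ((d:ℝ)-1)))⁻¹) * hπ2
    + π ^ ((d:ℝ)/2) * hbkey)

lemma integral_sq_maxwellian (d : ℕ) (hd : 1 ≤ d) {T : ℝ} (hT : 0 < T) :
    ∫ v : EuclideanSpace ℝ (Fin d), ‖v‖ ^ 2 * maxwellian d T v = (d : ℝ) * T := by
  have hb : (0:ℝ) < 1/(2*T) := by positivity
  have h2πT : (0:ℝ) < 2 * π * T := by positivity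
  have : ∀ v : EuclideanSpace ℝ (Fin d), ‖v‖ ^ 2 * maxwellian d T v
      = (2 * π * T) ^ (-(d : ℝ) / 2) * (‖v‖ ^ 2 * rexp (-(1/(2*T)) * ‖v‖ ^ 2)) := by
    intro v; rw [maxwellian_eq d hT]; ring
  rw [MeasureTheory.integral_congr_ae (Filter.Eventually.of_forall this),
    MeasureTheory.integral_const_mul, moment_eucl d hd hb]
  have h1 : (d : ℝ) / (2 * (1/(2*T))) = (d : ℝ) * T := by field_simp
  have h2 : π / (1/(2*T)) = 2 * π * T := by field_simp
  rw [h1, h2, ← mul_assoc, mul_comm ((2 * π * T) ^ (-(d : ℝ) / 2)) ((d:ℝ) * T), mul_assoc,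
    ← Real.rpow_add h2πT, show (-(d:ℝ)/2 + (d:ℝ)/2) = 0 by ring, Real.rpow_zero, mul_one]

lemma integrable_maxwellian (d : ℕ) {T : ℝ} (hT : 0 < T) :
    Integrable (maxwellian d T) := by
  by_contra h
  have := MeasureTheory.integral_undef h
  rw [integral_maxwellian d hT] at this
  norm_num at this

lemma integrable_sq_maxwellian (d : ℕ) (hd : 1 ≤ d) {T : ℝ} (hT : 0 < T) :
    Integrable (fun v : EuclideanSpace ℝ (Fin d) => ‖v‖ ^ 2 * maxwellian d T v) := by
  by_contra h
  have := MeasureTheory.integral_undef h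
  rw [integral_sq_maxwellian d hd hT] at this
  have hd' : (0:ℝ) < (d:ℝ) * T := by
    have : (0:ℝ) < (d:ℝ) := by exact_mod_cast Nat.lt_of_lt_of_le Nat.zero_lt_one hd
    positivity
  rw [this] at hd'
  exact lt_irrefl _ hd'

lemma mul_log_gibbs {a c : ℝ} (ha : 0 < a) (hc : 0 < c) :
    a - c ≤ a * Real.log a - a * Real.log c := by
  have h := Real.log_le_sub_one_of_pos (div_pos hc ha)
  rw [Real.log_div hc.ne' ha.ne'] at h
  have h2 := mul_le_mul_of_nonneg_left h ha.le
  have h3 : a * (c / a - 1) = c - a := by field_simp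
  nlinarith

lemma sub_mul_log_sub_nonneg {a c : ℝ} (ha : 0 < a) (hc : 0 < c) :
    0 ≤ (a - c) * (Real.log a - Real.log c) := by
  rcases le_total a c with h | h
  · have h1 : a - c ≤ 0 := by linarith
    have h2 : Real.log a - Real.log c ≤ 0 := by
      simp only [sub_nonpos]; exact Real.log_le_log ha h
    nlinarith
  · exact mul_nonneg (by linarith)
      (by simp only [sub_nonneg]; exact Real.log_le_log hc h)

lemma sub_mul_log_sub_eq_zero_iff {a c : ℝ} (ha : 0 < a) (hc : 0 < c) :
    (a - c) * (Real.log a - Real.log c) = 0 ↔ a = c := by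
  constructor
  · intro h
    by_contra hne
    rcases lt_or_gt_of_ne hne with hlt | hgt
    · have h1 : Real.log a < Real.log c := Real.log_lt_log ha hlt
      nlinarith
    · have h1 : Real.log c < Real.log a := Real.log_lt_log hc hgt
      nlinarith
  · rintro rfl; ring

lemma log_maxwellian (d : ℕ) {T : ℝ} (hT : 0 < T) (v : EuclideanSpace ℝ (Fin d)) :
    Real.log (maxwellian d T v)
      = Real.log ((2 * π * T) ^ (-(d : ℝ) / 2)) - ‖v‖ ^ 2 / (2 * T) := by
  unfold maxwellian
  rw [Real.log_mul (by positivity) (Real.exp_ne_zero _), Real.log_exp]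
  ring


/-- Entropy dissipation of the single-reservoir thermostat: for a positive
probability density `f` with the correct energy `dT`, the dissipation
`∫∫ log f · (m_T ρ_f - f)` is nonpositive, with equality iff `f = ρ_f m_T` a.e. -/
theorem thermostat_entropy_dissipation
    {Λ : Type*} [MeasurableSpace Λ] (μ : Measure Λ) [IsFiniteMeasure μ]
    (d : ℕ) (hd : 1 ≤ d) (T : ℝ) (hT : 0 < T)
    (f : Λ × EuclideanSpace ℝ (Fin d) → ℝ)
    (hfmeas : Measurable f) (hfpos : ∀ p, 0 < f p)
    (ρf : Λ → ℝ) (hρf : ∀ x, ρf x = ∫ v, f (x, v))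
    (hprob : ∫ p, f p ∂(μ.prod volume) = 1)
    (henergy : ∫ p, ‖p.2‖ ^ 2 * f p ∂(μ.prod volume) = (d : ℝ) * T)
    (hint1 : Integrable (fun p => f p * Real.log (f p)) (μ.prod volume))
    (hint2 : Integrable (fun p => ρf p.1 * maxwellian d T p.2 * Real.log (f p))
      (μ.prod volume))
    (hint3 : Integrable (fun p => ‖p.2‖ ^ 2 * f p) (μ.prod volume)) :
    (∫ p, Real.log (f p) * (maxwellian d T p.2 * ρf p.1 - f p) ∂(μ.prod volume)) ≤ 0 ∧
    ((∫ p, Real.log (f p) * (maxwellian d T p.2 * ρf p.1 - f p) ∂(μ.prod volume)) = 0 ↔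
      ∀ᵐ p ∂(μ.prod volume), f p = ρf p.1 * maxwellian d T p.2) := by
  set m : EuclideanSpace ℝ (Fin d) → ℝ := maxwellian d T with hm
  have hmpos : ∀ v, 0 < m v := maxwellian_pos d hT
  have hmint : Integrable m := integrable_maxwellian d hT
  have hmone : ∫ v, m v = 1 := integral_maxwellian d hT
  have hm2int : Integrable (fun v => ‖v‖ ^ 2 * m v) := integrable_sq_maxwellian d hd hT
  have hm2 : ∫ v, ‖v‖ ^ 2 * m v = (d : ℝ) * T := integral_sq_maxwellian d hd hT
  set cA : ℝ := Real.log ((2 * π * T) ^ (-(d : ℝ) / 2)) with hcA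
  have hlogm : ∀ v, Real.log (m v) = cA - ‖v‖ ^ 2 / (2 * T) := log_maxwellian d hT
  -- integrability of f
  have hf_int : Integrable f (μ.prod volume) := by
    by_contra h
    rw [MeasureTheory.integral_undef h] at hprob; norm_num at hprob
  -- basic facts about ρf
  have hρfun : ρf = fun x => ∫ v, f (x, v) := funext hρf
  have hρmeas : Measurable ρf := by
    rw [hρfun]
    exact (hfmeas.stronglyMeasurable.integral_prod_right').measurable
  have hρ_nonneg : ∀ x, 0 ≤ ρf x := fun x => by
    rw [hρf x]; exact integral_nonneg (fun v => (hfpos _).le)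
  have hρ_int : Integrable ρf μ := by rw [hρfun]; exact hf_int.integral_prod_left
  have hρ_one : ∫ x, ρf x ∂μ = 1 := by
    rw [hρfun, ← MeasureTheory.integral_prod f hf_int, hprob]
  have hx_f : ∀ᵐ x ∂μ, Integrable (fun v => f (x, v)) volume := hf_int.prod_right_ae
  have hx_fl : ∀ᵐ x ∂μ, Integrable (fun v => f (x, v) * Real.log (f (x, v))) volume :=
    hint1.prod_right_ae
  have hx_f2 : ∀ᵐ x ∂μ, Integrable (fun v => ‖v‖ ^ 2 * f (x, v)) volume :=
    hint3.prod_right_ae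
  have hρ_pos : ∀ᵐ x ∂μ, 0 < ρf x := by
    filter_upwards [hx_f] with x hx
    rw [hρf x]
    refine (integral_pos_iff_support_of_nonneg (fun v => (hfpos _).le) hx).mpr ?_
    have hsupp : Function.support (fun v => f (x, v)) = Set.univ :=
      Set.eq_univ_of_forall (fun v => (hfpos (x, v)).ne')
    rw [hsupp]
    exact Measure.measure_univ_pos.mpr (NeZero.ne _)
  -- integrability of ρ log ρ
  have hF1_int : Integrable (fun x => ∫ v, f (x, v) * Real.log (f (x, v))) μ :=
    hint1.integral_prod_left
  have hF2_int : Integrable (fun x => ∫ v, ‖v‖ ^ 2 * f (x, v)) μ :=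
    hint3.integral_prod_left
  have hGibbs : ∀ᵐ x ∂μ, ρf x * Real.log (ρf x)
      ≤ (∫ v, f (x, v) * Real.log (f (x, v))) + (1 / (2 * T)) * (∫ v, ‖v‖ ^ 2 * f (x, v))
        - cA * ρf x := by
    filter_upwards [hx_f, hx_fl, hx_f2, hρ_pos] with x hxf hxfl hxf2 hxρ
    have hpt : ∀ v, f (x, v) - ρf x * m v
        ≤ f (x, v) * Real.log (f (x, v))
          - (Real.log (ρf x) + cA) * f (x, v) + (1 / (2 * T)) * (‖v‖ ^ 2 * f (x, v)) := by
      intro v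
      have h := mul_log_gibbs (hfpos (x, v)) (mul_pos hxρ (hmpos v))
      rw [Real.log_mul hxρ.ne' (hmpos v).ne', hlogm v] at h
      have hrw : ‖v‖ ^ 2 / (2 * T) = (1 / (2 * T)) * ‖v‖ ^ 2 := by
        field_simp
      rw [hrw] at h
      ring_nf at h ⊢
      linarith [h]
    have hlhs_int : Integrable (fun v => f (x, v) - ρf x * m v) volume :=
      hxf.sub (hmint.const_mul _)
    have hB1 : Integrable (fun v : EuclideanSpace ℝ (Fin d) =>
        f (x, v) * Real.log (f (x, v)) - (Real.log (ρf x) + cA) * f (x, v)) volume :=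
      hxfl.sub (hxf.const_mul _)
    have hB2 : Integrable (fun v : EuclideanSpace ℝ (Fin d) =>
        (1 / (2 * T)) * (‖v‖ ^ 2 * f (x, v))) volume := hxf2.const_mul _
    have hrhs_int : Integrable (fun v => f (x, v) * Real.log (f (x, v))
        - (Real.log (ρf x) + cA) * f (x, v) + (1 / (2 * T)) * (‖v‖ ^ 2 * f (x, v))) volume :=
      hB1.add hB2
    have hmono := MeasureTheory.integral_mono hlhs_int hrhs_int (fun v => hpt v)
    rw [MeasureTheory.integral_sub hxf (hmint.const_mul _)] at hmono
    rw [MeasureTheory.integral_add hB1 hB2] at hmono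
    rw [MeasureTheory.integral_sub hxfl (hxf.const_mul _)] at hmono
    rw [MeasureTheory.integral_const_mul, MeasureTheory.integral_const_mul,
      MeasureTheory.integral_const_mul, hmone, ← hρf x] at hmono
    nlinarith [hmono]
  have hLower : ∀ᵐ x ∂μ, ρf x - 1 ≤ ρf x * Real.log (ρf x) := by
    filter_upwards [hρ_pos] with x hxρ
    have := mul_log_gibbs hxρ one_pos
    rw [Real.log_one, mul_zero, sub_zero] at this
    exact this
  have hU_int : Integrable (fun x => (∫ v, f (x, v) * Real.log (f (x, v)))
      + (1 / (2 * T)) * (∫ v, ‖v‖ ^ 2 * f (x, v)) - cA * ρf x) μ :=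
    (hF1_int.add (hF2_int.const_mul _)).sub (hρ_int.const_mul _)
  have hL : Integrable (fun x => ρf x * Real.log (ρf x)) μ := by
    have hB_int : Integrable (fun x => |(∫ v, f (x, v) * Real.log (f (x, v)))
        + (1 / (2 * T)) * (∫ v, ‖v‖ ^ 2 * f (x, v)) - cA * ρf x| + |ρf x - 1|) μ :=
      hU_int.abs.add ((hρ_int.sub (integrable_const 1)).abs)
    refine Integrable.mono' hB_int
      ((hρmeas.mul (Real.measurable_log.comp hρmeas)).aestronglyMeasurable) ?_
    filter_upwards [hGibbs, hLower] with x h1 h2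
    rw [Real.norm_eq_abs, abs_le]
    constructor
    · have h4 := neg_abs_le (ρf x - 1)
      have h3 := abs_nonneg ((∫ v, f (x, v) * Real.log (f (x, v)))
        + (1 / (2 * T)) * (∫ v, ‖v‖ ^ 2 * f (x, v)) - cA * ρf x)
      linarith
    · have h4 := le_abs_self ((∫ v, f (x, v) * Real.log (f (x, v)))
        + (1 / (2 * T)) * (∫ v, ‖v‖ ^ 2 * f (x, v)) - cA * ρf x)
      have h3 := abs_nonneg (ρf x - 1)
      linarith
  -- lift positivity of ρf to the product
  have hρpos_prod : ∀ᵐ p : Λ × EuclideanSpace ℝ (Fin d) ∂(μ.prod volume), 0 < ρf p.1 := by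
    simp only [MeasureTheory.ae_iff] at hρ_pos ⊢
    have hsubset : {p : Λ × EuclideanSpace ℝ (Fin d) | ¬ 0 < ρf p.1}
        ⊆ {x | ¬ 0 < ρf x} ×ˢ Set.univ := fun p hp => ⟨hp, trivial⟩
    refine measure_mono_null hsubset ?_
    rw [Measure.prod_prod, hρ_pos, zero_mul]
  -- the dissipation integrand and auxiliary integrable functions
  set P0 : Λ × EuclideanSpace ℝ (Fin d) → ℝ :=
    fun p => Real.log (f p) * (m p.2 * ρf p.1 - f p) with hP0
  have hP0_int : Integrable P0 (μ.prod volume) :=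
    (hint2.sub hint1).congr (Filter.Eventually.of_forall (fun p => by simp only [Pi.sub_apply]; rw [hP0]; ring))
  have hg_int : Integrable (fun p => ρf p.1 * m p.2) (μ.prod volume) := hρ_int.mul_prod hmint
  have hg_one : ∫ p, ρf p.1 * m p.2 ∂(μ.prod volume) = 1 := by
    rw [MeasureTheory.integral_prod_mul, hρ_one, hmone, one_mul]
  have hg2_int : Integrable (fun p => ‖p.2‖ ^ 2 * (ρf p.1 * m p.2)) (μ.prod volume) :=
    (hρ_int.mul_prod hm2int).congr (Filter.Eventually.of_forall (fun p => by ring))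
  have hg2 : ∫ p, ‖p.2‖ ^ 2 * (ρf p.1 * m p.2) ∂(μ.prod volume) = (d : ℝ) * T := by
    rw [MeasureTheory.integral_congr_ae
      (Filter.Eventually.of_forall (fun p => by ring :
        ∀ p : Λ × EuclideanSpace ℝ (Fin d),
          ‖p.2‖ ^ 2 * (ρf p.1 * m p.2) = ρf p.1 * (‖p.2‖ ^ 2 * m p.2))),
      MeasureTheory.integral_prod_mul (f := ρf) (g := fun v => ‖v‖ ^ 2 * m v), hρ_one, hm2,
      one_mul]
  have hP1a_int : Integrable (fun p => ρf p.1 * Real.log (ρf p.1) * m p.2) (μ.prod volume) :=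
    hL.mul_prod hmint
  have hP1a : ∫ p, ρf p.1 * Real.log (ρf p.1) * m p.2 ∂(μ.prod volume)
      = ∫ x, ρf x * Real.log (ρf x) ∂μ := by
    rw [MeasureTheory.integral_prod_mul (f := fun x => ρf x * Real.log (ρf x)) (g := m), hmone,
      mul_one]
  have hP1b_int : Integrable (fun p => f p * Real.log (ρf p.1)) (μ.prod volume) := by
    refine (MeasureTheory.integrable_prod_iff ?_).2 ⟨?_, ?_⟩
    · exact (hfmeas.mul ((Real.measurable_log.comp hρmeas).comp measurable_fst)).aestronglyMeasurable
    · filter_upwards [hx_f] with x hx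
      exact hx.mul_const _
    · have hLabs : Integrable (fun x => |ρf x * Real.log (ρf x)|) μ := hL.abs
      refine hLabs.congr ?_
      filter_upwards [hx_f] with x hx
      have h5 : ∀ v : EuclideanSpace ℝ (Fin d), ‖f (x, v) * Real.log (ρf x)‖
          = f (x, v) * |Real.log (ρf x)| := by
        intro v
        rw [Real.norm_eq_abs, abs_mul, abs_of_nonneg (hfpos (x, v)).le]
      rw [abs_mul, abs_of_nonneg (hρ_nonneg x),
        MeasureTheory.integral_congr_ae (Filter.Eventually.of_forall h5),
        MeasureTheory.integral_mul_const, ← hρf x]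
  have hP1b : ∫ p, f p * Real.log (ρf p.1) ∂(μ.prod volume)
      = ∫ x, ρf x * Real.log (ρf x) ∂μ := by
    rw [MeasureTheory.integral_prod _ hP1b_int]
    refine MeasureTheory.integral_congr_ae (Filter.Eventually.of_forall (fun x => ?_))
    show (∫ v, f (x, v) * Real.log (ρf (x, v).1)) = ρf x * Real.log (ρf x)
    have h6 : (∫ v, f (x, v) * Real.log (ρf (x, v).1))
        = (∫ v, f (x, v)) * Real.log (ρf x) := MeasureTheory.integral_mul_const (Real.log (ρf x)) (fun v => f (x, v))
    rw [h6, ← hρf x]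
  -- the nonnegative entropy production Ψ
  set Ψ : Λ × EuclideanSpace ℝ (Fin d) → ℝ :=
    fun p => (ρf p.1 * m p.2 - f p) * (Real.log (ρf p.1 * m p.2) - Real.log (f p)) with hΨ
  have hdecomp : ∀ᵐ p ∂(μ.prod volume), Ψ p
      = -P0 p + (ρf p.1 * Real.log (ρf p.1) * m p.2 - f p * Real.log (ρf p.1))
        + cA * (ρf p.1 * m p.2 - f p)
        - (1 / (2 * T)) * (‖p.2‖ ^ 2 * (ρf p.1 * m p.2) - ‖p.2‖ ^ 2 * f p) := by
    filter_upwards [hρpos_prod] with p hp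
    rw [hΨ, hP0]
    simp only
    rw [Real.log_mul hp.ne' (hmpos p.2).ne', hlogm p.2]
    have hT' : (2 * T) ≠ 0 := by positivity
    field_simp
    ring
  have hN : Integrable (fun p => -P0 p) (μ.prod volume) := hP0_int.neg
  have hS1 : Integrable (fun p => ρf p.1 * Real.log (ρf p.1) * m p.2
      - f p * Real.log (ρf p.1)) (μ.prod volume) := hP1a_int.sub hP1b_int
  have hA1 : Integrable (fun p => -P0 p + (ρf p.1 * Real.log (ρf p.1) * m p.2
      - f p * Real.log (ρf p.1))) (μ.prod volume) := hN.add hS1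
  have hA2 : Integrable (fun p => cA * (ρf p.1 * m p.2 - f p)) (μ.prod volume) :=
    (hg_int.sub hf_int).const_mul cA
  have hA3 : Integrable (fun p => (1 / (2 * T)) * (‖p.2‖ ^ 2 * (ρf p.1 * m p.2)
      - ‖p.2‖ ^ 2 * f p)) (μ.prod volume) := (hg2_int.sub hint3).const_mul _
  have hA12 : Integrable (fun p => -P0 p + (ρf p.1 * Real.log (ρf p.1) * m p.2
      - f p * Real.log (ρf p.1)) + cA * (ρf p.1 * m p.2 - f p)) (μ.prod volume) := hA1.add hA2
  have hdecompS : ∀ᵐ p ∂(μ.prod volume),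
      -P0 p + (ρf p.1 * Real.log (ρf p.1) * m p.2 - f p * Real.log (ρf p.1))
        + cA * (ρf p.1 * m p.2 - f p)
        - (1 / (2 * T)) * (‖p.2‖ ^ 2 * (ρf p.1 * m p.2) - ‖p.2‖ ^ 2 * f p) = Ψ p :=
    hdecomp.mono (fun p hp => hp.symm)
  have hΨ_int : Integrable Ψ (μ.prod volume) := (hA12.sub hA3).congr hdecompS
  have hΨ_val : ∫ p, Ψ p ∂(μ.prod volume) = -(∫ p, P0 p ∂(μ.prod volume)) := by
    rw [MeasureTheory.integral_congr_ae hdecomp]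
    rw [MeasureTheory.integral_sub hA12 hA3]
    rw [MeasureTheory.integral_add hA1 hA2]
    rw [MeasureTheory.integral_add hN hS1]
    rw [MeasureTheory.integral_neg, MeasureTheory.integral_sub hP1a_int hP1b_int,
      MeasureTheory.integral_const_mul, MeasureTheory.integral_sub hg_int hf_int,
      MeasureTheory.integral_const_mul, MeasureTheory.integral_sub hg2_int hint3,
      hP1a, hP1b, hg_one, hprob, hg2, henergy]
    ring
  have hΨ_nonneg : ∀ᵐ p ∂(μ.prod volume), 0 ≤ Ψ p := by
    filter_upwards [hρpos_prod] with p hp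
    exact sub_mul_log_sub_nonneg (mul_pos hp (hmpos p.2)) (hfpos p)
  have hInt_nonneg : 0 ≤ ∫ p, Ψ p ∂(μ.prod volume) :=
    MeasureTheory.integral_nonneg_of_ae hΨ_nonneg
  constructor
  · linarith [hΨ_val, hInt_nonneg]
  · constructor
    · intro hD
      have hzero : ∫ p, Ψ p ∂(μ.prod volume) = 0 := by rw [hΨ_val, hD, neg_zero]
      have hae := (MeasureTheory.integral_eq_zero_iff_of_nonneg_ae hΨ_nonneg hΨ_int).mp hzero
      filter_upwards [hae, hρpos_prod] with p hp hρp
      have := (sub_mul_log_sub_eq_zero_iff (mul_pos hρp (hmpos p.2)) (hfpos p)).mp hp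
      exact this.symm
    · intro hfe
      have hzero : ∫ p, Ψ p ∂(μ.prod volume) = 0 := by
        rw [MeasureTheory.integral_eq_zero_iff_of_nonneg_ae hΨ_nonneg hΨ_int]
        filter_upwards [hfe] with p hp
        rw [hΨ]
        simp only [hp, sub_self, zero_mul, Pi.zero_apply]
      rw [← neg_neg (∫ p, P0 p ∂(μ.prod volume)), ← hΨ_val, hzero, neg_zero]
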